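/- Let ν > 0, λ ≥ 0, β ∈ ℂ, and let v : (0,1] → ℂ be a continuous function satisfying, for all r ∈ (0,1], the integral identity v(r) = r^{ν}( β - λ ∫_0^r (s^{1-ν}/(2ν)) v(s) ds ) + λ r^{-ν} ∫_0^r (s^{1+ν}/(2ν)) v(s) ds, where the integrals are assumed finite. Suppose also that r ↦ r^{-ν} v(r) is bounded on (0,1]. Then |v(r)| ≤ |β| e^{λ/ν} r^{ν} for all r ∈ (0,1]. -/

import Mathlib

open Set MeasureTheory intervalIntegral

/-- Gronwall-type estimate: if a continuous `v : (0,1] → ℂ` satisfies the integral identity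
`v(r) = r^ν (β - λ ∫_0^r (s^{1-ν}/(2ν)) v ds) + λ r^{-ν} ∫_0^r (s^{1+ν}/(2ν)) v ds`
and `r ↦ r^{-ν} v(r)` is bounded on `(0,1]`, then `|v(r)| ≤ |β| e^{λ/ν} r^ν`. -/
theorem gronwall_bessel_bound (ν lam : ℝ) (hν : 0 < ν) (hlam : 0 ≤ lam) (β : ℂ)
    (v : ℝ → ℂ) (hcont : ContinuousOn v (Set.Ioc (0:ℝ) 1))
    (hint1 : ∀ r ∈ Set.Ioc (0:ℝ) 1,
      IntervalIntegrable (fun s : ℝ => ((s ^ (1 - ν) / (2*ν) : ℝ) : ℂ) * v s)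
        MeasureTheory.volume 0 r)
    (hint2 : ∀ r ∈ Set.Ioc (0:ℝ) 1,
      IntervalIntegrable (fun s : ℝ => ((s ^ (1 + ν) / (2*ν) : ℝ) : ℂ) * v s)
        MeasureTheory.volume 0 r)
    (hrep : ∀ r ∈ Set.Ioc (0:ℝ) 1,
      v r = ((r ^ ν : ℝ) : ℂ) *
              (β - (lam:ℂ) * ∫ s in (0:ℝ)..r, ((s ^ (1 - ν) / (2*ν) : ℝ) : ℂ) * v s)
          + (lam:ℂ) * ((r ^ (-ν) : ℝ) : ℂ) *
              ∫ s in (0:ℝ)..r, ((s ^ (1 + ν) / (2*ν) : ℝ) : ℂ) * v s)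
    (hbdd : ∃ M : ℝ, ∀ r ∈ Set.Ioc (0:ℝ) 1, r ^ (-ν) * ‖v r‖ ≤ M) :
    ∀ r ∈ Set.Ioc (0:ℝ) 1, ‖v r‖ ≤ ‖β‖ * Real.exp (lam/ν) * r ^ ν := by
  obtain ⟨M₀, hM₀⟩ := hbdd
  set c : ℝ := lam / ν with hc_def
  have hc : 0 ≤ c := div_nonneg hlam hν.le
  set w : ℝ → ℝ := fun s => s ^ (-ν) * ‖v s‖ with hw_def
  have hw0 : w 0 = 0 := by
    simp [hw_def, Real.zero_rpow (neg_ne_zero.mpr hν.ne')]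
  have hwnn : ∀ s, 0 ≤ s → 0 ≤ w s := fun s hs =>
    mul_nonneg (Real.rpow_nonneg hs _) (norm_nonneg _)
  set M : ℝ := max M₀ 0 with hM_def
  have hM : ∀ s ∈ Ioc (0:ℝ) 1, w s ≤ M := fun s hs => (hM₀ s hs).trans (le_max_left _ _)
  have hMnn : 0 ≤ M := le_max_right _ _
  have hwcont : ContinuousOn w (Ioc (0:ℝ) 1) := by
    exact (continuousOn_id.rpow_const (fun x hx => Or.inl hx.1.ne')).mul hcont.norm
  -- integrability of w on [0, r]
  have hwint : ∀ r ∈ Ioc (0:ℝ) 1, IntervalIntegrable w volume 0 r := by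
    intro r hr
    rw [intervalIntegrable_iff_integrableOn_Ioc_of_le hr.1.le]
    have hsub : Ioc (0:ℝ) r ⊆ Ioc 0 1 := Ioc_subset_Ioc_right hr.2
    refine Integrable.mono' (integrable_const M)
      ((hwcont.mono hsub).aestronglyMeasurable measurableSet_Ioc) ?_
    filter_upwards [ae_restrict_mem measurableSet_Ioc] with s hs
    rw [Real.norm_of_nonneg (hwnn s (hsub hs).1.le)]
    exact hM s (hsub hs)
  -- ‖v s‖ = s^ν * w s
  have hvw : ∀ s : ℝ, 0 < s → ‖v s‖ = s ^ ν * w s := by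
    intro s hs
    rw [hw_def]
    rw [← mul_assoc, ← Real.rpow_add hs]
    simp
  have hXnn : ∀ r ∈ Ioc (0:ℝ) 1, 0 ≤ ∫ s in (0:ℝ)..r, w s := by
    intro r hr
    exact intervalIntegral.integral_nonneg hr.1.le (fun s hs => hwnn s hs.1)
  -- Key Gronwall-type inequality
  have hkey : ∀ r ∈ Ioc (0:ℝ) 1, w r ≤ ‖β‖ + c * ∫ s in (0:ℝ)..r, w s := by
    intro r hr
    have hr0 : (0:ℝ) < r := hr.1
    have h2ν : (0:ℝ) < 2 * ν := by linarith
    set X : ℝ := ∫ s in (0:ℝ)..r, w s with hX_def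
    have hXpos : 0 ≤ X := hXnn r hr
    have h1 : ‖∫ s in (0:ℝ)..r, ((s ^ (1 - ν) / (2*ν) : ℝ) : ℂ) * v s‖
        ≤ (1/(2*ν)) * X := by
      refine (intervalIntegral.norm_integral_le_integral_norm hr0.le).trans ?_
      have hmono := intervalIntegral.integral_mono_ae_restrict hr0.le ((hint1 r hr).norm)
        ((hwint r hr).const_mul (1/(2*ν))) ?_
      · rw [intervalIntegral.integral_const_mul] at hmono; exact hmono
      · rw [Filter.EventuallyLE, ae_restrict_iff' measurableSet_Icc]
        filter_upwards [compl_mem_ae_iff.mpr (measure_singleton (0:ℝ))] with s hs0 hs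
        have hspos : 0 < s := lt_of_le_of_ne hs.1 (Ne.symm hs0)
        have hs1 : s ≤ 1 := hs.2.trans hr.2
        have heq : ‖((s ^ (1 - ν) / (2*ν) : ℝ) : ℂ) * v s‖
            = (s ^ (1 - ν) / (2*ν)) * ‖v s‖ := by
          rw [norm_mul, Complex.norm_real, Real.norm_of_nonneg (by positivity)]
        rw [heq, hvw s hspos]
        have hpow : s ^ (1 - ν) * s ^ ν = s := by
          rw [← Real.rpow_add hspos]; simp
        have heq2 : s ^ (1 - ν) / (2*ν) * (s ^ ν * w s)
            = s * w s * (2*ν)⁻¹ := by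
          have h' : s ^ (1 - ν) / (2*ν) * (s ^ ν * w s)
              = (s ^ (1 - ν) * s ^ ν) * w s * (2*ν)⁻¹ := by ring
          rw [h', hpow]
        rw [heq2]
        have hsw : s * w s ≤ w s := mul_le_of_le_one_left (hwnn s hspos.le) hs1
        have hinv : (0:ℝ) ≤ (2*ν)⁻¹ := by positivity
        have : 1/(2*ν) * w s = w s * (2*ν)⁻¹ := by ring
        rw [this]
        exact mul_le_mul_of_nonneg_right hsw hinv
    have h2 : ‖∫ s in (0:ℝ)..r, ((s ^ (1 + ν) / (2*ν) : ℝ) : ℂ) * v s‖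
        ≤ (r ^ ν * r ^ ν) * ((1/(2*ν)) * X) := by
      refine (intervalIntegral.norm_integral_le_integral_norm hr0.le).trans ?_
      have hmono := intervalIntegral.integral_mono_ae_restrict hr0.le ((hint2 r hr).norm)
        ((hwint r hr).const_mul (r ^ ν * r ^ ν * (1/(2*ν)))) ?_
      · rw [intervalIntegral.integral_const_mul] at hmono
        calc _ ≤ r ^ ν * r ^ ν * (1/(2*ν)) * X := hmono
          _ = (r ^ ν * r ^ ν) * ((1/(2*ν)) * X) := by ring
      · rw [Filter.EventuallyLE, ae_restrict_iff' measurableSet_Icc]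
        filter_upwards [compl_mem_ae_iff.mpr (measure_singleton (0:ℝ))] with s hs0 hs
        have hspos : 0 < s := lt_of_le_of_ne hs.1 (Ne.symm hs0)
        have hs1 : s ≤ 1 := hs.2.trans hr.2
        have heq : ‖((s ^ (1 + ν) / (2*ν) : ℝ) : ℂ) * v s‖
            = (s ^ (1 + ν) / (2*ν)) * ‖v s‖ := by
          rw [norm_mul, Complex.norm_real, Real.norm_of_nonneg (by positivity)]
        rw [heq, hvw s hspos]
        -- s^{1+ν} * s^ν = s * s^{2ν} ≤ s * r^{2ν} = s * (r^ν * r^ν)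
        have hpow : s ^ (1 + ν) * s ^ ν = s * s ^ (2*ν) := by
          rw [← Real.rpow_add hspos, show 1 + ν + ν = 1 + 2*ν by ring,
            Real.rpow_add hspos, Real.rpow_one]
        have hsr : s ^ (2*ν) ≤ r ^ (2*ν) :=
          Real.rpow_le_rpow hspos.le hs.2 h2ν.le
        have hr2 : r ^ (2*ν) = r ^ ν * r ^ ν := by
          rw [← Real.rpow_add hr0]; ring_nf
        have key : s ^ (1 + ν) * s ^ ν ≤ r ^ ν * r ^ ν := by
          rw [hpow, ← hr2]
          calc s * s ^ (2*ν) ≤ 1 * r ^ (2*ν) :=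
                mul_le_mul hs1 hsr (Real.rpow_nonneg hspos.le _) zero_le_one
            _ = r ^ (2*ν) := one_mul _
        have hws : 0 ≤ w s := hwnn s hspos.le
        have heq2 : s ^ (1 + ν) / (2*ν) * (s ^ ν * w s)
            = (s ^ (1 + ν) * s ^ ν) * (w s * (2*ν)⁻¹) := by ring
        have heq3 : r ^ ν * r ^ ν * (1/(2*ν)) * w s
            = (r ^ ν * r ^ ν) * (w s * (2*ν)⁻¹) := by ring
        rw [heq2, heq3]
        exact mul_le_mul_of_nonneg_right key (by positivity)
    -- combine
    have hrepr := hrep r hr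
    have hA : ‖((r ^ ν : ℝ) : ℂ) *
        (β - (lam:ℂ) * ∫ s in (0:ℝ)..r, ((s ^ (1 - ν) / (2*ν) : ℝ) : ℂ) * v s)‖
        ≤ r ^ ν * (‖β‖ + lam * ((1/(2*ν)) * X)) := by
      rw [norm_mul, Complex.norm_real, Real.norm_of_nonneg (Real.rpow_nonneg hr0.le _)]
      refine mul_le_mul_of_nonneg_left ?_ (Real.rpow_nonneg hr0.le _)
      refine (norm_sub_le _ _).trans ?_
      refine add_le_add_right ?_ _
      rw [norm_mul, Complex.norm_real, Real.norm_of_nonneg hlam]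
      exact mul_le_mul_of_nonneg_left h1 hlam
    have hB : ‖(lam:ℂ) * ((r ^ (-ν) : ℝ) : ℂ) *
        ∫ s in (0:ℝ)..r, ((s ^ (1 + ν) / (2*ν) : ℝ) : ℂ) * v s‖
        ≤ lam * r ^ (-ν) * ((r ^ ν * r ^ ν) * ((1/(2*ν)) * X)) := by
      rw [norm_mul, norm_mul, Complex.norm_real, Complex.norm_real,
        Real.norm_of_nonneg hlam, Real.norm_of_nonneg (Real.rpow_nonneg hr0.le _)]
      exact mul_le_mul_of_nonneg_left h2
        (mul_nonneg hlam (Real.rpow_nonneg hr0.le _))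
    have hnorm : ‖v r‖ ≤ r ^ ν * (‖β‖ + lam * ((1/(2*ν)) * X))
        + lam * r ^ (-ν) * ((r ^ ν * r ^ ν) * ((1/(2*ν)) * X)) := by
      rw [hrepr]
      exact (norm_add_le _ _).trans (add_le_add hA hB)
    have hab : r ^ (-ν) * r ^ ν = 1 := by
      rw [← Real.rpow_add hr0]; simp
    have hfinal : r ^ (-ν) * (r ^ ν * (‖β‖ + lam * ((1/(2*ν)) * X))
        + lam * r ^ (-ν) * ((r ^ ν * r ^ ν) * ((1/(2*ν)) * X))) = ‖β‖ + c * X := by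
      rw [hc_def]
      linear_combination (‖β‖ + lam * X / (2*ν) + (r ^ (-ν) * r ^ ν + 1) * lam * X / (2*ν)) * hab
    calc w r = r ^ (-ν) * ‖v r‖ := rfl
      _ ≤ r ^ (-ν) * (r ^ ν * (‖β‖ + lam * ((1/(2*ν)) * X))
          + lam * r ^ (-ν) * ((r ^ ν * r ^ ν) * ((1/(2*ν)) * X))) :=
        mul_le_mul_of_nonneg_left hnorm (Real.rpow_nonneg hr0.le _)
      _ = ‖β‖ + c * X := hfinal
  -- iteration
  have hiter : ∀ n : ℕ, ∀ r ∈ Ioc (0:ℝ) 1,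
      w r ≤ ‖β‖ * Real.exp (c * r) + M * c ^ n * r ^ n / (Nat.factorial n) := by
    rcases eq_or_lt_of_le hc with hc0 | hc0
    · -- c = 0 : direct bound
      intro n r hr
      have hkr := hkey r hr
      rw [← hc0, zero_mul, add_zero] at hkr
      have h1 : (1:ℝ) ≤ Real.exp (c * r) :=
        Real.one_le_exp (mul_nonneg hc hr.1.le)
      have h2 : (0:ℝ) ≤ M * c ^ n * r ^ n / (Nat.factorial n) :=
        div_nonneg (mul_nonneg (mul_nonneg hMnn (pow_nonneg hc _))
          (pow_nonneg hr.1.le _)) (Nat.cast_nonneg _)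
      nlinarith [norm_nonneg β]
    · intro n
      induction n with
      | zero =>
        intro r hr
        have h := hM r hr
        have h1 : (1:ℝ) ≤ Real.exp (c * r) :=
          Real.one_le_exp (mul_nonneg hc hr.1.le)
        simp only [pow_zero, Nat.factorial_zero, Nat.cast_one, mul_one, div_one]
        nlinarith [norm_nonneg β]
      | succ n ih =>
        intro r hr
        have hr0 := hr.1
        have hfac : (0:ℝ) < (Nat.factorial n : ℝ) :=
          Nat.cast_pos.mpr (Nat.factorial_pos n)
        refine (hkey r hr).trans ?_
        have hbint : IntervalIntegrable
            (fun s => ‖β‖ * Real.exp (c*s) + M * c^n * s^n / (Nat.factorial n))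
            volume 0 r := by
          apply Continuous.intervalIntegrable
          fun_prop
        have hmono : (∫ s in (0:ℝ)..r, w s) ≤ ∫ s in (0:ℝ)..r,
            (‖β‖ * Real.exp (c*s) + M * c^n * s^n / (Nat.factorial n)) := by
          refine intervalIntegral.integral_mono_on hr0.le (hwint r hr) hbint ?_
          intro s hs
          rcases eq_or_lt_of_le hs.1 with h0 | h0
          · rw [← h0, hw0]; positivity
          · exact ih s ⟨h0, hs.2.trans hr.2⟩
        have hexp : (∫ s in (0:ℝ)..r, Real.exp (c*s)) = (Real.exp (c*r) - 1)/c := by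
          have hd : ∀ x ∈ uIcc (0:ℝ) r,
              HasDerivAt (fun s => Real.exp (c*s)/c) (Real.exp (c*x)) x := by
            intro x _
            have h1 : HasDerivAt (fun s : ℝ => c*s) c x := by
              simpa using (hasDerivAt_id x).const_mul c
            have h2 := (Real.hasDerivAt_exp (c*x)).comp x h1
            have h3 := h2.div_const c
            simpa [mul_div_assoc, mul_div_cancel_right₀ _ hc0.ne'] using h3
          rw [intervalIntegral.integral_eq_sub_of_hasDerivAt hd
            (Continuous.intervalIntegrable (by fun_prop) _ _)]
          simp [sub_div]
        have hpow : (∫ s in (0:ℝ)..r, s^n) = r^(n+1)/(n+1) := by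
          simp [integral_pow]
        have hcalcint : (∫ s in (0:ℝ)..r,
            (‖β‖ * Real.exp (c*s) + M * c^n * s^n / (Nat.factorial n)))
            = ‖β‖ * ((Real.exp (c*r) - 1)/c)
              + (M * c^n / (Nat.factorial n)) * (r^(n+1)/(n+1)) := by
          rw [intervalIntegral.integral_add
            (Continuous.intervalIntegrable (by fun_prop) _ _)
            (Continuous.intervalIntegrable (by fun_prop) _ _)]
          rw [intervalIntegral.integral_const_mul, hexp]
          congr 1
          rw [show (fun s : ℝ => M * c^n * s^n / (Nat.factorial n))
            = fun s : ℝ => (M * c^n / (Nat.factorial n)) * s^n from by funext s; ring]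
          rw [intervalIntegral.integral_const_mul, hpow]
        calc ‖β‖ + c * ∫ s in (0:ℝ)..r, w s
            ≤ ‖β‖ + c * (‖β‖ * ((Real.exp (c*r) - 1)/c)
              + (M * c^n / (Nat.factorial n)) * (r^(n+1)/(n+1))) := by
              rw [← hcalcint]
              exact add_le_add_right (mul_le_mul_of_nonneg_left hmono hc0.le) _
          _ = ‖β‖ * Real.exp (c*r) + M * c^(n+1) * r^(n+1) / (Nat.factorial (n+1)) := by
              rw [Nat.factorial_succ]
              push_cast
              field_simp
              ring
  -- conclusion
  intro r hr
  have hlim : Filter.Tendsto (fun n : ℕ => ‖β‖ * Real.exp c + M * (c ^ n / (Nat.factorial n)))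
      Filter.atTop (nhds (‖β‖ * Real.exp c)) := by
    have h0 := (FloorSemiring.tendsto_pow_div_factorial_atTop (K := ℝ) c).const_mul M
    have := Filter.Tendsto.add (tendsto_const_nhds
      (x := ‖β‖ * Real.exp c) (f := Filter.atTop (α := ℕ))) h0
    simpa using this
  have hwr : w r ≤ ‖β‖ * Real.exp c := by
    refine ge_of_tendsto hlim (Filter.Eventually.of_forall fun n => ?_)
    refine (hiter n r hr).trans ?_
    have h1 : Real.exp (c * r) ≤ Real.exp c := by
      apply Real.exp_le_exp.mpr
      nlinarith [hr.1.le, hr.2]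
    have h2 : M * c ^ n * r ^ n / (Nat.factorial n) ≤ M * (c ^ n / (Nat.factorial n)) := by
      have hF : (0:ℝ) ≤ ((Nat.factorial n : ℝ))⁻¹ := by positivity
      have hrn : r ^ n ≤ 1 := pow_le_one₀ hr.1.le hr.2
      have hprod : 0 ≤ M * c ^ n * ((Nat.factorial n : ℝ))⁻¹ :=
        mul_nonneg (mul_nonneg hMnn (pow_nonneg hc n)) hF
      rw [div_eq_mul_inv, div_eq_mul_inv]
      nlinarith [hprod, hrn]
    nlinarith [norm_nonneg β, h1, h2]
  have hrpos := hr.1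
  calc ‖v r‖ = r ^ ν * w r := hvw r hrpos
    _ ≤ r ^ ν * (‖β‖ * Real.exp c) := by
        exact mul_le_mul_of_nonneg_left hwr (Real.rpow_nonneg hrpos.le _)
    _ = ‖β‖ * Real.exp (lam / ν) * r ^ ν := by rw [hc_def]; ring
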